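/- Let A = M₂(ℂ) with calculus Ω¹ freely generated by central elements s¹, s² and da = s¹[E₁₂, a] + s²[E₂₁, a], and inner product ⟨c, ē⟩ = tr(c e*). For a right vector field K with K(sⁱ) = K_i ∈ M₂(ℂ), the reality condition ⟨K((sⁱa)*) − K(sⁱa)*, 1̄⟩ = 0 for all a ∈ M₂(ℂ) (using (s¹)* = −s²) holds if and only if K₁* = −K₂. Moreover, under this condition the element b = ½([E₁₂, K₁] + [E₂₁, K₂]) is Hermitian and satisfies the divergence condition tr(a(b + b* − [E₁₂,K₁] − [E₂₁,K₂])) = 0 for all a ∈ M₂(ℂ). -/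

import Mathlib

open Matrix

/-- On A = M₂(ℂ) with the calculus da = s¹[E₁₂,a] + s²[E₂₁,a]
(central generators, (s¹)* = −s²) and inner product ⟨c, ē⟩ = tr(c e*), for a
right vector field K with K(sⁱ) = K_i the reality condition
⟨K((sⁱa)*) − K(sⁱa)*, 1̄⟩ = 0 for all a (where K((s¹a)*) = K(−s²a*) = −K₂a*
and K(sⁱa)* = (K_i a)* = a* K_i*) holds iff K₁* = −K₂.  Moreover, under this
condition b = ½([E₁₂,K₁] + [E₂₁,K₂]) is Hermitian and satisfies the divergence
condition tr(a(b + b* − [E₁₂,K₁] − [E₂₁,K₂])) = 0 for all a. -/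
theorem stmt13
    (K₁ K₂ : Matrix (Fin 2) (Fin 2) ℂ) :
    letI E12 : Matrix (Fin 2) (Fin 2) ℂ := Matrix.single 0 1 1
    letI E21 : Matrix (Fin 2) (Fin 2) ℂ := Matrix.single 1 0 1
    letI b : Matrix (Fin 2) (Fin 2) ℂ :=
      (1/2 : ℂ) • ((E12 * K₁ - K₁ * E12) + (E21 * K₂ - K₂ * E21))
    (((∀ a : Matrix (Fin 2) (Fin 2) ℂ,
          Matrix.trace (-(K₂ * aᴴ) - aᴴ * K₁ᴴ) = 0)
        ∧ (∀ a : Matrix (Fin 2) (Fin 2) ℂ,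
          Matrix.trace (-(K₁ * aᴴ) - aᴴ * K₂ᴴ) = 0))
      ↔ K₁ᴴ = -K₂)
    ∧ (K₁ᴴ = -K₂ →
        bᴴ = b ∧
        ∀ a : Matrix (Fin 2) (Fin 2) ℂ,
          Matrix.trace (a * (b + bᴴ - (E12 * K₁ - K₁ * E12)
            - (E21 * K₂ - K₂ * E21))) = 0) := by
  set E12 : Matrix (Fin 2) (Fin 2) ℂ := Matrix.single 0 1 1 with hE12def
  set E21 : Matrix (Fin 2) (Fin 2) ℂ := Matrix.single 1 0 1 with hE21def
  set b : Matrix (Fin 2) (Fin 2) ℂ :=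
    (1/2 : ℂ) • ((E12 * K₁ - K₁ * E12) + (E21 * K₂ - K₂ * E21)) with hbdef
  constructor
  · constructor
    · rintro ⟨h1, h2⟩
      ext i j
      have := h1 (Matrix.single i j 1)
      simp [Matrix.trace, Matrix.diag, mul_apply, Matrix.single, Fin.sum_univ_two] at this
      fin_cases i <;> fin_cases j <;> simp_all <;> linear_combination -this
    · intro h
      have h2 : K₂ᴴ = -K₁ := by
        rw [show K₂ = -K₁ᴴ by rw [h, neg_neg]]; simp
      constructor <;> intro a <;>
        simp [trace_sub, trace_neg, trace_mul_comm _ aᴴ, h, h2, Matrix.neg_mul,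
          trace_neg]
  · intro h
    have h2 : K₂ᴴ = -K₁ := by
      rw [show K₂ = -K₁ᴴ by rw [h, neg_neg]]; simp
    have hE12 : E12ᴴ = E21 := by
      rw [hE12def, hE21def]; ext i j
      fin_cases i <;> fin_cases j <;> simp [Matrix.single, conjTranspose_apply]
    have hE21 : E21ᴴ = E12 := by
      rw [hE12def, hE21def]; ext i j
      fin_cases i <;> fin_cases j <;> simp [Matrix.single, conjTranspose_apply]
    have hb : bᴴ = b := by
      rw [hbdef, Matrix.conjTranspose_smul]
      simp only [conjTranspose_add, conjTranspose_sub, conjTranspose_mul, hE12, hE21, h, h2]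
      rw [show (star (1/2 : ℂ)) = 1/2 by norm_num]
      simp only [neg_mul, mul_neg]
      module
    refine ⟨hb, fun a => ?_⟩
    have : b + bᴴ - (E12 * K₁ - K₁ * E12) - (E21 * K₂ - K₂ * E21) = 0 := by
      rw [hb, hbdef]
      module
    rw [this, Matrix.mul_zero, trace_zero]
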